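/- Pullback-pushout decomposition in adhesive categories: given two horizontally composable commutative squares (1) (left) and (2) (right) such that the composite square (1)+(2) is a pullback, square (2) is a pushout, square (1) commutes, and the left vertical morphism a is a monomorphism, then square (1) is a pullback. -/

import Mathlib

open CategoryTheory

open CategoryTheory.Limits in
/-- If `a` is a mono and `d ≫ a = b ≫ d'`, then the square with top `d`, left `𝟙 B`,
right `a`, bottom `b ≫ d'` is a pullback. -/
lemma aux_isPullback_id_of_mono {𝒞 : Type*} [Category 𝒞] {A B A' B' : 𝒞}
    (d : B ⟶ A) (d' : B' ⟶ A') (a : A ⟶ A') (b : B ⟶ B') [Mono a]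
    (hcomm : d ≫ a = b ≫ d') : IsPullback d (𝟙 B) a (b ≫ d') := by
  refine IsPullback.of_isLimit' ⟨by simp [hcomm]⟩ ?_
  refine PullbackCone.IsLimit.mk _ (fun s => s.snd) (fun s => ?_) (fun s => by simp)
    (fun s m h₁ h₂ => by simpa using h₂)
  rw [← cancel_mono a, Category.assoc, hcomm]
  exact s.condition.symm

/-- Pullback-pushout decomposition in adhesive categories: if the composite square
is a pullback, the right square is a pushout, the left square commutes, and `a` is
a monomorphism, then the left square is a pullback. -/
theorem stmt_18 {𝒞 : Type*} [Category 𝒞] [Adhesive 𝒞] {A B C A' B' C' : 𝒞}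
    (d : B ⟶ A) (e : C ⟶ B) (d' : B' ⟶ A') (e' : C' ⟶ B')
    (a : A ⟶ A') (b : B ⟶ B') (c : C ⟶ C') [Mono a]
    (hpb : IsPullback (e ≫ d) c a (e' ≫ d'))
    (hpo : IsPushout e c b e')
    (hcomm : d ≫ a = b ≫ d') :
    IsPullback d b a d' := by
  -- `c` is a mono, as a pullback of the mono `a`
  have hc : Mono c := Limits.PullbackCone.mono_snd_of_is_pullback_of_mono hpb.isLimit
  -- the pushout `hpo` is a van Kampen square
  have hvk : hpo.IsVanKampen := Adhesive.van_kampen' hpo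
  -- form the pullback `Q = A ×_{A'} B'`
  have _ : Limits.HasPullback a d' := Adhesive.hasPullback_of_mono_left a d'
  set Q := Limits.pullback a d' with hQ
  have Hq : IsPullback (Limits.pullback.fst a d') (Limits.pullback.snd a d') a d' :=
    IsPullback.of_hasPullback a d'
  -- the comparison map `u : B ⟶ Q`
  let u : B ⟶ Q := Limits.pullback.lift d b hcomm
  have hu1 : u ≫ Limits.pullback.fst a d' = d := Limits.pullback.lift_fst _ _ _
  have hu2 : u ≫ Limits.pullback.snd a d' = b := Limits.pullback.lift_snd _ _ _
  -- front-left face of the cube: `B = B ×_{B'} Q`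
  have Hfl : IsPullback u (𝟙 B) (Limits.pullback.snd a d') b := by
    refine IsPullback.of_right ?_ (by simp [hu2]) Hq
    rw [hu1]
    exact aux_isPullback_id_of_mono d d' a b hcomm
  -- front-right face of the cube: `C = C' ×_{B'} Q`
  have Hfr : IsPullback (e ≫ u) c (Limits.pullback.snd a d') e' := by
    refine IsPullback.of_right ?_ (by simp [hu2, hpo.w]) Hq
    rw [Category.assoc, hu1]
    exact hpb
  -- apply the van Kampen property to conclude the top face is a pushout
  have htop : IsPushout e (𝟙 C) u (e ≫ u) := by
    refine (hvk e (𝟙 C) u (e ≫ u) (𝟙 C) (𝟙 B) c (Limits.pullback.snd a d')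
      IsPullback.of_id_snd
      (IsKernelPair.id_of_mono c)
      ⟨by simp [hu2]⟩ ⟨by simp [hu2, hpo.w]⟩ ⟨by simp⟩).mpr ⟨Hfl, Hfr⟩
  -- `u` is an isomorphism, with inverse `htop.desc (𝟙 B) e _`
  have hw : e ≫ 𝟙 B = 𝟙 C ≫ e := by simp
  let v : Q ⟶ B := htop.desc (𝟙 B) e hw
  have huv : u ≫ v = 𝟙 B := htop.inl_desc (𝟙 B) e hw
  have hvu : v ≫ u = 𝟙 Q := by
    apply htop.hom_ext
    · rw [← Category.assoc, huv]; simp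
    · rw [Category.comp_id, Category.assoc, ← Category.assoc u v u, huv, Category.id_comp]
  have : IsIso u := ⟨v, huv, hvu⟩
  -- transport the pullback `Hq` along the isomorphism `u`
  have key : IsPullback (u ≫ Limits.pullback.fst a d') b a (𝟙 B' ≫ d') :=
    IsPullback.paste_horiz (IsPullback.of_horiz_isIso ⟨by simp [hu2]⟩) Hq
  rw [hu1, Category.id_comp] at key
  exact key
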